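/- For every ρ̄ > 0, every ε > 0, and every u < ū, there exists a unique ρ > ρ̄ such that (u − ū)² = 2ε·((ρ − ρ̄)/(ρ + ρ̄))·(p(ρ) − p(ρ̄)). (Existence follows since the function F(ρ) = 2ε·((ρ − ρ̄)/(ρ + ρ̄))·(p(ρ) − p(ρ̄)) vanishes at ρ̄, tends to +∞ as ρ → ∞, and is strictly increasing on [ρ̄, ∞).) -/

import Mathlib

open Real Filter Topology

/-- The pressure-like function `p(ρ) = ∫₀^ρ ξ·e^ξ dξ`. -/
noncomputable def p (ρ : ℝ) : ℝ := ∫ ξ in (0:ℝ)..ρ, ξ * Real.exp ξ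

lemma hasDerivAt_aux (x : ℝ) :
    HasDerivAt (fun t : ℝ => (t - 1) * Real.exp t + 1) (x * Real.exp x) x := by
  have h1 := (((hasDerivAt_id x).sub_const 1).mul (Real.hasDerivAt_exp x)).add_const 1
  refine h1.congr_deriv ?_; simp; ring

lemma p_eq (x : ℝ) : p x = (x - 1) * Real.exp x + 1 := by
  have hint : IntervalIntegrable (fun ξ : ℝ => ξ * Real.exp ξ) MeasureTheory.volume 0 x :=
    (continuous_id.mul Real.continuous_exp).intervalIntegrable 0 x
  have h := intervalIntegral.integral_eq_sub_of_hasDerivAt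
    (f := fun t : ℝ => (t - 1) * Real.exp t + 1)
    (fun ξ _ => hasDerivAt_aux ξ) hint
  rw [p, h]
  simp [Real.exp_zero]

lemma p_strictMonoOn (r : ℝ) (hr : 0 < r) : StrictMonoOn p (Set.Ici r) := by
  have hpe : p = fun x => (x - 1) * Real.exp x + 1 := funext p_eq
  rw [hpe]
  apply strictMonoOn_of_deriv_pos (convex_Ici r)
  · fun_prop
  · intro x hx
    rw [interior_Ici] at hx
    rw [(hasDerivAt_aux x).deriv]
    have : 0 < x := lt_trans hr hx
    positivity

theorem stmt1 (ρbar : ℝ) (hρ : 0 < ρbar) (ε : ℝ) (hε : 0 < ε) (u ubar : ℝ) (hu : u < ubar) :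
    ∃! ρ : ℝ, ρbar < ρ ∧
      (u - ubar) ^ 2 = 2 * ε * ((ρ - ρbar) / (ρ + ρbar)) * (p ρ - p ρbar) := by
  set c := (u - ubar) ^ 2 with hc
  have hne : u - ubar ≠ 0 := sub_ne_zero.mpr (ne_of_lt hu)
  have hcpos : 0 < c := lt_of_le_of_ne (sq_nonneg _) (Ne.symm (pow_ne_zero 2 hne))
  set F : ℝ → ℝ := fun ρ => 2 * ε * ((ρ - ρbar) / (ρ + ρbar)) * (p ρ - p ρbar) with hF
  have hps := p_strictMonoOn ρbar hρ
  have hFmono : StrictMonoOn F (Set.Ici ρbar) := by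
    intro a ha b hb hab
    have ha' : ρbar ≤ a := ha
    have hb' : ρbar ≤ b := hb
    have hga : 0 ≤ (a - ρbar) / (a + ρbar) := div_nonneg (by linarith) (by linarith)
    have hgab : (a - ρbar) / (a + ρbar) < (b - ρbar) / (b + ρbar) := by
      rw [div_lt_div_iff₀ (by linarith) (by linarith)]; nlinarith
    have hpa : 0 ≤ p a - p ρbar := by
      rcases eq_or_lt_of_le ha' with h | h
      · simp [← h]
      · linarith [hps Set.self_mem_Ici ha h]
    have hpab : p a - p ρbar < p b - p ρbar := by linarith [hps ha hb hab]
    have key := mul_lt_mul'' hgab hpab hga hpa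
    simp only [hF]
    calc 2 * ε * ((a - ρbar) / (a + ρbar)) * (p a - p ρbar)
        = 2 * ε * (((a - ρbar) / (a + ρbar)) * (p a - p ρbar)) := by ring
      _ < 2 * ε * (((b - ρbar) / (b + ρbar)) * (p b - p ρbar)) := by
          exact mul_lt_mul_of_pos_left key (by positivity)
      _ = 2 * ε * ((b - ρbar) / (b + ρbar)) * (p b - p ρbar) := by ring
  -- choose a large point b
  set t := 3 * c / (2 * ε) with ht
  have htpos : 0 < t := by positivity
  have ht' : 2 * ε * t = 3 * c := by rw [ht]; field_simp
  set b := max (max (2 * ρbar) 1) (Real.sqrt (p ρbar + t) + 1) with hbdef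
  have hb1 : (1 : ℝ) ≤ b := le_trans (le_max_right _ _) (le_max_left _ _)
  have hb2 : 2 * ρbar ≤ b := le_trans (le_max_left _ _) (le_max_left _ _)
  have hbpos : 0 < b := by linarith
  have hb3 : Real.sqrt (p ρbar + t) < b :=
    lt_of_lt_of_le (by linarith [Real.sqrt_nonneg (p ρbar + t)]) (le_max_right _ _)
  have hbsq : p ρbar + t < b ^ 2 := (Real.sqrt_lt' hbpos).mp hb3
  have hpb : b ^ 2 ≤ p b := by
    rw [p_eq]
    nlinarith [Real.add_one_le_exp b, Real.exp_pos b]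
  have hq : (1 : ℝ) / 3 ≤ (b - ρbar) / (b + ρbar) := by
    rw [div_le_div_iff₀ (by norm_num) (by linarith)]
    linarith
  have hh : t < p b - p ρbar := by linarith
  have hρb : ρbar < b := by linarith
  have hFb : c < F b := by
    simp only [hF]
    have h1 : 2 * ε * (1 / 3) * t < 2 * ε * (1 / 3) * (p b - p ρbar) := by
      apply mul_lt_mul_of_pos_left hh (by positivity)
    have h2 : 2 * ε * (1 / 3) * (p b - p ρbar) ≤
        2 * ε * ((b - ρbar) / (b + ρbar)) * (p b - p ρbar) := by
      apply mul_le_mul_of_nonneg_right _ (by linarith)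
      apply mul_le_mul_of_nonneg_left hq (by positivity)
    nlinarith
  have hF0 : F ρbar = 0 := by simp [hF]
  have hFc : ContinuousOn F (Set.Icc ρbar b) := by
    have hpcont : Continuous p := by
      have hpe : p = fun x => (x - 1) * Real.exp x + 1 := funext p_eq
      rw [hpe]; fun_prop
    apply ContinuousOn.mul
    · apply ContinuousOn.mul continuousOn_const
      apply ContinuousOn.div (by fun_prop) (by fun_prop)
      intro x hx
      have := hx.1
      intro hcon
      linarith
    · exact (hpcont.sub continuous_const).continuousOn
  obtain ⟨ρ, hρmem, hFρ⟩ := intermediate_value_Ioo (le_of_lt hρb) hFc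
    (show c ∈ Set.Ioo (F ρbar) (F b) from ⟨by rw [hF0]; exact hcpos, hFb⟩)
  refine ⟨ρ, ⟨hρmem.1, hFρ.symm⟩, ?_⟩
  rintro y ⟨hy1, hy2⟩
  exact hFmono.injOn (le_of_lt hy1) (le_of_lt hρmem.1) (show F y = F ρ by rw [hFρ]; exact hy2.symm)
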